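/- arXiv:1405.2017 — 2 statements merged into one kernel-verified Lean document; each statement's English description precedes it below -/
import Mathlib

section
/- Let X_d be a random variable with pdf f_{X_d}(x) = (2 x^{2/η_d − 1})/(η_d (ρ_o R^{η_d})^{2/η_d}) on [0, ρ_o R^{η_d}], and X_c independent with pdf f_{X_c}(x) = (2πλ x^{2/η_c − 1} e^{−πλ(x/ρ_o)^{2/η_c}})/(η_c ρ_o^{2/η_c}) on [0,∞), where ρ_o R^{η_d} = P_u. Then for 0 ≤ x ≤ P_u, the conditional density of X_d given the event {X_d ≤ T_d X_c} satisfies f_{X_d | X_d ≤ T_d X_c}(x) = (2 x^{2/η_d − 1} (πλ)^{η_c/η_d} e^{−πλ(x/(T_d ρ_o))^{2/η_c}}) / (η_c (T_d ρ_o)^{2/η_d} γ(η_c/η_d, πλ(P_u/(T_dρ_o))^{2/η_c})). -/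
open Real MeasureTheory

/-- Lower incomplete gamma function γ(a,b) = ∫₀^b x^{a-1} e^{-x} dx. -/
noncomputable def lowerGamma (a b : ℝ) : ℝ := ∫ x in (0:ℝ)..b, x ^ (a - 1) * Real.exp (-x)

/-- pdf of X_d = ρ_o r_d^{η_d}, r_d uniform-in-disk of radius R. -/
noncomputable def fXd (ρo R ηd : ℝ) (x : ℝ) : ℝ :=
  2 * x ^ (2 / ηd - 1) / (ηd * (ρo * R ^ ηd) ^ (2 / ηd))

/-- pdf of X_c = ρ_o r_c^{η_c}, r_c Rayleigh with pdf 2πλ r e^{-πλ r²}. -/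
noncomputable def fXc (lam ρo ηc : ℝ) (x : ℝ) : ℝ :=
  2 * π * lam * x ^ (2 / ηc - 1) * Real.exp (-(π * lam * (x / ρo) ^ (2 / ηc))) /
    (ηc * ρo ^ (2 / ηc))


lemma ccdf_fXc (lam ρo ηc : ℝ) (hlam : 0 < lam) (hρ : 0 < ρo) (hc : 0 < ηc)
    (t : ℝ) (ht : 0 ≤ t) :
    (∫ y in Set.Ioi t, fXc lam ρo ηc y)
      = Real.exp (-(π * lam * (t / ρo) ^ (2 / ηc))) := by
  set G : ℝ → ℝ := fun y => -Real.exp (-(π * lam * (y / ρo) ^ (2 / ηc))) with hG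
  have hderiv : ∀ y ∈ Set.Ioi t, HasDerivAt G (fXc lam ρo ηc y) y := by
    intro y hy
    have hy0 : 0 < y := lt_of_le_of_lt ht hy
    have h1 : HasDerivAt (fun y : ℝ => (y / ρo) ^ (2 / ηc))
        (1 / ρo * (2 / ηc) * (y / ρo) ^ (2 / ηc - 1)) y :=
      ((hasDerivAt_id y).div_const ρo).rpow_const (Or.inl (by positivity))
    have h2 := (((h1.const_mul (π * lam)).neg).exp).neg
    refine h2.congr_deriv ?_
    symm
    simp only [Pi.neg_apply]
    rw [fXc, Real.div_rpow hy0.le hρ.le (2 / ηc - 1)]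
    have hr : ρo ^ (2 / ηc - 1) * ρo = ρo ^ (2 / ηc) := by
      rw [← Real.rpow_add_one hρ.ne']; ring_nf
    have hρ1 : ρo ^ (2 / ηc - 1) ≠ 0 := by positivity
    have hρ2 : ρo ^ (2 / ηc) ≠ 0 := by positivity
    field_simp
    ring_nf
    ring_nf at hr
    rw [mul_inv_cancel₀ hc.ne']
    linear_combination hr
  have hcont : Continuous G := by
    have h1 : Continuous fun y : ℝ => (y / ρo) ^ (2 / ηc) := by
      apply Continuous.comp (g := fun z : ℝ => z ^ (2 / ηc))
      · exact continuous_iff_continuousAt.2 fun z =>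
          Real.continuousAt_rpow_const _ _ (Or.inr (by positivity))
      · exact continuous_id.div_const ρo
    exact (Real.continuous_exp.comp ((continuous_const.mul h1).neg)).neg
  have hnonneg : ∀ y ∈ Set.Ioi t, 0 ≤ fXc lam ρo ηc y := by
    intro y hy
    have hy0 : 0 < y := lt_of_le_of_lt ht hy
    rw [fXc]
    apply div_nonneg
    · have := Real.rpow_nonneg hy0.le (2 / ηc - 1)
      have := Real.exp_nonneg (-(π * lam * (y / ρo) ^ (2 / ηc)))
      positivity
    · positivity
  have htend : Filter.Tendsto G Filter.atTop (nhds 0) := by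
    have h1 : Filter.Tendsto (fun y : ℝ => π * lam * (y / ρo) ^ (2 / ηc))
        Filter.atTop Filter.atTop := by
      apply Filter.Tendsto.const_mul_atTop (by positivity)
      exact (tendsto_rpow_atTop (by positivity)).comp (Filter.tendsto_id.atTop_div_const hρ)
    have h2 := Real.tendsto_exp_neg_atTop_nhds_zero.comp h1
    have h3 := h2.neg
    rw [neg_zero] at h3
    exact h3
  have key := MeasureTheory.integral_Ioi_of_hasDerivAt_of_nonneg
    hcont.continuousWithinAt hderiv hnonneg htend
  rw [key]
  simp [G]

lemma alg_id (X E I A T L ηc ηd p : ℝ) (hA : A ≠ 0) (hT : T ≠ 0) (hL : L ≠ 0)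
    (hI : I ≠ 0) (hηc : ηc ≠ 0) (hηd : ηd ≠ 0) (hp : p = 2 / ηc) :
    (2 * X / (ηd * A) * E) / (2 / (ηd * A) * I) = 2 * X * L * E / (ηc * T * (p * (L / T) * I)) := by
  subst hp
  field_simp

lemma gamma_eq (p c P s : ℝ) (hp : 0 < p) (hc : 0 < c) (hP : 0 < P) (hs : 0 < s) :
    lowerGamma s (c * P ^ p)
      = p * c ^ s * ∫ z in (0:ℝ)..P, z ^ (p * s - 1) * Real.exp (-(c * z ^ p)) := by
  set b : ℝ := c * P ^ p with hb
  have hb0 : 0 < b := by positivity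
  set ψ : ℝ → ℝ := fun u => (u / c) ^ (1 / p) with hψ
  set ψ' : ℝ → ℝ := fun u => 1 / c * (1 / p) * (u / c) ^ (1 / p - 1) with hψ'
  have hψinv : ∀ z : ℝ, 0 ≤ z → ψ (c * z ^ p) = z := by
    intro z hz
    show (c * z ^ p / c) ^ (1 / p) = z
    rw [mul_div_cancel_left₀ _ hc.ne', ← Real.rpow_mul hz, mul_one_div, div_self hp.ne',
      Real.rpow_one]
  have himg : ψ '' Set.Ioo 0 b = Set.Ioo 0 P := by
    ext z
    simp only [Set.mem_image, Set.mem_Ioo]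
    constructor
    · rintro ⟨u, ⟨hu0, hub⟩, rfl⟩
      refine ⟨Real.rpow_pos_of_pos (by positivity) _, ?_⟩
      have h1 : u / c < P ^ p := by rw [hb] at hub; rw [div_lt_iff₀ hc]; linarith [mul_comm c (P ^ p)]
      calc (u / c) ^ (1 / p) < (P ^ p) ^ (1 / p) :=
            Real.rpow_lt_rpow (by positivity) h1 (by positivity)
        _ = P := by
            rw [← Real.rpow_mul hP.le, mul_one_div, div_self hp.ne', Real.rpow_one]
    · rintro ⟨hz0, hzP⟩
      refine ⟨c * z ^ p, ⟨by positivity, ?_⟩, hψinv z hz0.le⟩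
      rw [hb]
      have := Real.rpow_lt_rpow hz0.le hzP hp
      nlinarith
  have hinj : Set.InjOn ψ (Set.Ioo 0 b) := by
    intro u hu v hv huv
    have h1 : ((u / c) ^ (1 / p)) ^ p = ((v / c) ^ (1 / p)) ^ p := by
      rw [show (u / c) ^ (1 / p) = ψ u from rfl, show (v / c) ^ (1 / p) = ψ v from rfl, huv]
    rw [← Real.rpow_mul (div_pos hu.1 hc).le,
      ← Real.rpow_mul (div_pos hv.1 hc).le, one_div_mul_cancel hp.ne',
      Real.rpow_one, Real.rpow_one, div_eq_div_iff hc.ne' hc.ne'] at h1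
    exact mul_right_cancel₀ hc.ne' h1
  have hd : ∀ u ∈ Set.Ioo 0 b, HasDerivWithinAt ψ (ψ' u) (Set.Ioo 0 b) u := by
    intro u hu
    have hu0 := hu.1
    exact (((hasDerivAt_id u).div_const c).rpow_const
      (Or.inl (by positivity))).hasDerivWithinAt
  have key := MeasureTheory.integral_image_eq_integral_abs_deriv_smul measurableSet_Ioo hd hinj
    (fun z => z ^ (p * s - 1) * Real.exp (-(c * z ^ p)))
  rw [himg] at key
  have hrw : Set.EqOn (fun u => |ψ' u| • ((ψ u) ^ (p * s - 1) * Real.exp (-(c * (ψ u) ^ p))))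
      (fun u => 1 / (p * c ^ s) * (u ^ (s - 1) * Real.exp (-u))) (Set.Ioo 0 b) := by
    intro u hu
    have hu0 : 0 < u := hu.1
    have huc : 0 < u / c := by positivity
    have habs : |ψ' u| = ψ' u := abs_of_pos (by
      exact mul_pos (by positivity) (Real.rpow_pos_of_pos huc _))
    have h1 : (ψ u) ^ p = u / c := by
      show ((u / c) ^ (1 / p)) ^ p = u / c
      rw [← Real.rpow_mul huc.le, one_div_mul_cancel hp.ne', Real.rpow_one]
    have h2 : (ψ u) ^ (p * s - 1) = (u / c) ^ (1 / p * (p * s - 1)) := by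
      show ((u / c) ^ (1 / p)) ^ (p * s - 1) = _
      rw [← Real.rpow_mul huc.le]
    have h3 : (u / c) ^ (1 / p - 1) * (u / c) ^ (1 / p * (p * s - 1)) = (u / c) ^ (s - 1) := by
      rw [← Real.rpow_add huc]
      congr 1
      field_simp
      ring
    have h4 : (u / c) ^ (s - 1) = u ^ (s - 1) / c ^ (s - 1) := Real.div_rpow hu0.le hc.le _
    have h5 : c ^ (s - 1) * c = c ^ s := by
      rw [← Real.rpow_add_one hc.ne']; ring_nf
    have h6 : c * (u / c) = u := by field_simp
    simp only [habs, smul_eq_mul, h1, h2, h6]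
    have hcs : (0:ℝ) < c ^ s := Real.rpow_pos_of_pos hc _
    have hcs1 : (0:ℝ) < c ^ (s - 1) := Real.rpow_pos_of_pos hc _
    rw [hψ']
    rw [show 1 / c * (1 / p) * (u / c) ^ (1 / p - 1) *
        ((u / c) ^ (1 / p * (p * s - 1)) * Real.exp (-u))
        = 1 / c * (1 / p) * ((u / c) ^ (1 / p - 1) * (u / c) ^ (1 / p * (p * s - 1))) *
          Real.exp (-u) from by ring, h3, h4]
    field_simp
    linear_combination (-1) * h5
  rw [MeasureTheory.setIntegral_congr_fun measurableSet_Ioo hrw] at key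
  rw [MeasureTheory.integral_const_mul] at key
  have e1 : lowerGamma s b = ∫ u in Set.Ioo 0 b, u ^ (s - 1) * Real.exp (-u) := by
    rw [lowerGamma, intervalIntegral.integral_of_le hb0.le,
      MeasureTheory.integral_Ioc_eq_integral_Ioo]
  have e2 : (∫ z in (0:ℝ)..P, z ^ (p * s - 1) * Real.exp (-(c * z ^ p)))
      = ∫ z in Set.Ioo 0 P, z ^ (p * s - 1) * Real.exp (-(c * z ^ p)) := by
    rw [intervalIntegral.integral_of_le hP.le, MeasureTheory.integral_Ioc_eq_integral_Ioo]
  rw [e1, e2, key]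
  have hcs : (0:ℝ) < c ^ s := Real.rpow_pos_of_pos hc _
  field_simp

lemma lowerGamma_pos (s b : ℝ) (hs : 0 < s) (hb : 0 < b) : 0 < lowerGamma s b := by
  rw [lowerGamma]
  apply intervalIntegral.intervalIntegral_pos_of_pos_on
  · exact (intervalIntegral.intervalIntegrable_rpow' (by linarith)).mul_continuousOn
      (Real.continuous_exp.comp continuous_neg).continuousOn
  · intro u hu
    exact mul_pos (Real.rpow_pos_of_pos hu.1 _) (Real.exp_pos _)
  · exact hb

theorem stmt6 (lam ρo R Td Pu ηc ηd : ℝ) (hlam : 0 < lam) (hρ : 0 < ρo) (hR : 0 < R)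
    (hTd : 0 < Td) (hc : 2 < ηc) (hd : 2 < ηd) (hPu : ρo * R ^ ηd = Pu) :
    ∀ x : ℝ, 0 ≤ x → x ≤ Pu →
      (fXd ρo R ηd x * ∫ y in Set.Ioi (x / Td), fXc lam ρo ηc y) /
          (∫ z in (0:ℝ)..Pu, fXd ρo R ηd z * ∫ y in Set.Ioi (z / Td), fXc lam ρo ηc y) =
        (2 * x ^ (2 / ηd - 1) * (π * lam) ^ (ηc / ηd) *
            Real.exp (-(π * lam * (x / (Td * ρo)) ^ (2 / ηc)))) /
          (ηc * (Td * ρo) ^ (2 / ηd) *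
            lowerGamma (ηc / ηd) (π * lam * (Pu / (Td * ρo)) ^ (2 / ηc))) := by
  intro x hx hxPu
  have hc0 : (0:ℝ) < ηc := by linarith
  have hd0 : (0:ℝ) < ηd := by linarith
  have hPu0 : 0 < Pu := by rw [← hPu]; positivity
  set p : ℝ := 2 / ηc with hpdef
  set s : ℝ := ηc / ηd with hsdef
  have hp : 0 < p := by positivity
  have hs : 0 < s := by positivity
  set c : ℝ := π * lam / (Td * ρo) ^ p with hcdef
  have hcpos : 0 < c := by positivity
  have hps : p * s = 2 / ηd := by rw [hpdef, hsdef]; field_simp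
  -- generic conversions
  have hconv : ∀ z : ℝ, 0 ≤ z → π * lam * (z / (Td * ρo)) ^ p = c * z ^ p := by
    intro z hz
    rw [Real.div_rpow hz (by positivity), hcdef]
    ring
  -- numerator
  rw [ccdf_fXc lam ρo ηc hlam hρ hc0 (x / Td) (div_nonneg hx hTd.le)]
  have ex : x / Td / ρo = x / (Td * ρo) := div_div x Td ρo
  rw [ex]
  -- denominator congruence
  have hI : (∫ z in (0:ℝ)..Pu, fXd ρo R ηd z * ∫ y in Set.Ioi (z / Td), fXc lam ρo ηc y)
      = ∫ z in (0:ℝ)..Pu, 2 / (ηd * Pu ^ (2 / ηd)) * (z ^ (p * s - 1) * Real.exp (-(c * z ^ p))) := by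
    apply intervalIntegral.integral_congr
    intro z hz
    rw [Set.uIcc_of_le hPu0.le] at hz
    beta_reduce
    rw [ccdf_fXc lam ρo ηc hlam hρ hc0 (z / Td) (div_nonneg hz.1 hTd.le)]
    rw [div_div z Td ρo, hconv z hz.1, fXd, hPu, hps]
    ring
  rw [hI, intervalIntegral.integral_const_mul]
  -- gamma identity
  have hγ := gamma_eq p c Pu s hp hcpos hPu0 hs
  rw [hconv Pu hPu0.le, hγ]
  have hΓ := lowerGamma_pos s (c * Pu ^ p) hs (by positivity)
  rw [hγ] at hΓ
  set I : ℝ := ∫ z in (0:ℝ)..Pu, z ^ (p * s - 1) * Real.exp (-(c * z ^ p)) with hIdef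
  have hcs : (0:ℝ) < c ^ s := Real.rpow_pos_of_pos hcpos _
  have hIpos : 0 < I := by
    by_contra h0
    push_neg at h0
    have h1 : 0 ≤ p * c ^ s * (-I) := mul_nonneg (mul_pos hp hcs).le (neg_nonneg.mpr h0)
    have h2 : p * c ^ s * (-I) = -(p * c ^ s * I) := by ring
    rw [h2] at h1
    linarith
  -- c ^ s = (π*lam)^s / (Td*ρo)^(2/ηd)
  have hcs_eq : c ^ s = (π * lam) ^ s / (Td * ρo) ^ (2 / ηd) := by
    rw [hcdef, Real.div_rpow (by positivity) (by positivity),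
      ← Real.rpow_mul (by positivity : (0:ℝ) ≤ Td * ρo), ← hps]
  rw [fXd, hPu, hcs_eq]
  have hT : (0:ℝ) < (Td * ρo) ^ (2 / ηd) := Real.rpow_pos_of_pos (by positivity) _
  have hL : (0:ℝ) < (π * lam) ^ s := Real.rpow_pos_of_pos (by positivity) _
  have hA : (0:ℝ) < Pu ^ (2 / ηd) := Real.rpow_pos_of_pos hPu0 _
  exact alg_id (x ^ (2 / ηd - 1)) (Real.exp (-(π * lam * (x / (Td * ρo)) ^ (2 / ηc)))) I
    (Pu ^ (2 / ηd)) ((Td * ρo) ^ (2 / ηd)) ((π * lam) ^ s) ηc ηd p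
    hA.ne' hT.ne' hL.ne' hIpos.ne' hc0.ne' hd0.ne' hpdef
end

section
/- Let λ > 0, ρ_o > 0, P_u > 0, η_c > 2, η_d > 2 and T_d > 1. With X̃_c and X_d as in the T_d ≤ 1 case (X̃_c with truncated pdf 2πλ x^{2/η_c−1}e^{−πλ(x/ρ_o)^{2/η_c}}/(η_c ρ_o^{2/η_c}(1−e^{−πλ(P_u/ρ_o)^{2/η_c}})) on [0,P_u]; X_d independent with pdf 2x^{2/η_d−1}/(η_d P_u^{2/η_d}) on [0,P_u]), one has P{X̃_c < X_d/T_d} = 1/(1 − e^{−πλ(P_u/ρ_o)^{2/η_c}}) − η_c (T_d ρ_o)^{2/η_d} γ(η_c/η_d, πλ(P_u/(T_d ρ_o))^{2/η_c}) / (η_d P_u^{2/η_d} (πλ)^{η_c/η_d} (1 − e^{−πλ(P_u/ρ_o)^{2/η_c}})). -/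
open Real MeasureTheory

lemma lg_integrand_intble (a T : ℝ) (ha : 0 < a) :
    IntervalIntegrable (fun u : ℝ => u ^ (a - 1) * Real.exp (-u)) volume 0 T :=
  (intervalIntegral.intervalIntegrable_rpow' (by linarith)).mul_continuousOn
    ((Real.continuous_exp.comp continuous_neg).continuousOn)

lemma lowerGamma_zero (a : ℝ) : lowerGamma a 0 = 0 := by
  simp [lowerGamma]

lemma lowerGamma_one (T : ℝ) : lowerGamma 1 T = 1 - Real.exp (-T) := by
  have h : lowerGamma 1 T = ∫ u in (0:ℝ)..T, Real.exp (-u) := by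
    unfold lowerGamma
    refine intervalIntegral.integral_congr fun x hx => ?_
    simp [Real.rpow_zero]
  rw [h, intervalIntegral.integral_comp_neg (fun u => Real.exp u), integral_exp]
  simp

lemma lowerGamma_continuousOn (a T : ℝ) (ha : 0 < a) :
    ContinuousOn (lowerGamma a) (Set.uIcc 0 T) :=
  intervalIntegral.continuousOn_primitive_interval' (lg_integrand_intble a T ha) Set.left_mem_uIcc

lemma lowerGamma_hasDerivAt (a T : ℝ) (ha : 0 < a) (hT : 0 < T) :
    HasDerivAt (lowerGamma a) (T ^ (a - 1) * Real.exp (-T)) T := by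
  have hmeas : Measurable (fun u : ℝ => u ^ (a - 1) * Real.exp (-u)) := by
    exact (measurable_id.pow_const _).mul (measurable_id.neg.exp)
  refine intervalIntegral.integral_hasDerivAt_right (lg_integrand_intble a T ha)
    (hmeas.stronglyMeasurable.stronglyMeasurableAtFilter) ?_
  exact ((Real.continuousAt_rpow_const T (a-1) (Or.inl hT.ne')).mul
    ((Real.continuous_exp.comp continuous_neg).continuousAt))

lemma exp_cont (c p b : ℝ) (hp : 0 < p) :
    ContinuousOn (fun x : ℝ => Real.exp (-(c * x ^ p))) (Set.Icc 0 b) := by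
  refine Real.continuous_exp.comp_continuousOn ?_
  exact (continuousOn_const.mul
    (fun x _ => (Real.continuousAt_rpow_const x p (Or.inr hp.le)).continuousWithinAt)).neg

lemma key_intble (s p c b : ℝ) (hs : 0 < s) (hp : 0 < p) (hb : 0 ≤ b) :
    IntervalIntegrable (fun x : ℝ => x ^ (s - 1) * Real.exp (-(c * x ^ p))) volume 0 b := by
  refine (intervalIntegral.intervalIntegrable_rpow' (by linarith)).mul_continuousOn ?_
  rw [Set.uIcc_of_le hb]
  exact exp_cont c p b hp

/-- Key substitution lemma. -/
lemma key_integral (s p c b : ℝ) (hs : 0 < s) (hp : 0 < p) (hc : 0 < c) (hb : 0 ≤ b) :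
    ∫ x in (0:ℝ)..b, x ^ (s - 1) * Real.exp (-(c * x ^ p)) =
      c ^ (-(s / p)) / p * lowerGamma (s / p) (c * b ^ p) := by
  rcases eq_or_lt_of_le hb with rfl | hb
  · simp [Real.zero_rpow hp.ne', lowerGamma_zero]
  · set a := s / p with ha_def
    have ha : 0 < a := div_pos hs hp
    set F : ℝ → ℝ := fun x => c ^ (-(s / p)) / p * lowerGamma a (c * x ^ p) with hF
    have hmaps : ∀ x ∈ Set.Icc (0:ℝ) b, c * x ^ p ∈ Set.Icc (0:ℝ) (c * b ^ p) := by
      intro x hx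
      exact ⟨mul_nonneg hc.le (Real.rpow_nonneg hx.1 p),
        mul_le_mul_of_nonneg_left (Real.rpow_le_rpow hx.1 hx.2 hp.le) hc.le⟩
    have hcontF : ContinuousOn F (Set.Icc 0 b) := by
      refine ContinuousOn.mul continuousOn_const ?_
      have h1 : ContinuousOn (fun x : ℝ => c * x ^ p) (Set.Icc 0 b) :=
        continuousOn_const.mul
          (fun x _ => (Real.continuousAt_rpow_const x p (Or.inr hp.le)).continuousWithinAt)
      have h2 : ContinuousOn (lowerGamma a) (Set.Icc 0 (c * b ^ p)) := by
        have := lowerGamma_continuousOn a (c * b ^ p) ha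
        rwa [Set.uIcc_of_le (by positivity)] at this
      exact h2.comp h1 hmaps
    have hderiv : ∀ x ∈ Set.Ioo (0:ℝ) b, HasDerivWithinAt F
        (x ^ (s - 1) * Real.exp (-(c * x ^ p))) (Set.Ioi x) x := by
      intro x hx
      have hx0 : 0 < x := hx.1
      have hT : 0 < c * x ^ p := by positivity
      have h1 : HasDerivAt (fun x : ℝ => c * x ^ p) (c * (p * x ^ (p - 1))) x :=
        (Real.hasDerivAt_rpow_const (Or.inl hx0.ne')).const_mul c
      have h2 := lowerGamma_hasDerivAt a (c * x ^ p) ha hT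
      have h3 := (h2.comp x h1).const_mul (c ^ (-(s / p)) / p)
      have hxs : (x ^ p) ^ (a - 1) = x ^ (s - p) := by
        rw [← Real.rpow_mul hx0.le]
        congr 1
        rw [ha_def]
        field_simp
      have key1 : c ^ (-(s / p)) * (c ^ (a - 1) * c) = 1 := by
        rw [← Real.rpow_add_one hc.ne', ← Real.rpow_add hc]
        rw [ha_def]
        norm_num
      have heq : c ^ (-(s / p)) / p * ((c * x ^ p) ^ (a - 1) * Real.exp (-(c * x ^ p)) *
          (c * (p * x ^ (p - 1)))) = x ^ (s - 1) * Real.exp (-(c * x ^ p)) := by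
        rw [Real.mul_rpow hc.le (Real.rpow_nonneg hx0.le p), hxs]
        have hxx : x ^ (s - p) * x ^ (p - 1) = x ^ (s - 1) := by
          rw [← Real.rpow_add hx0]
          congr 1
          ring
        rw [show c ^ (-(s / p)) / p * (c ^ (a-1) * x ^ (s-p) * Real.exp (-(c * x ^ p)) *
              (c * (p * x ^ (p-1)))) =
            (c ^ (-(s / p)) * (c ^ (a-1) * c)) * (x ^ (s-p) * x ^ (p-1) *
              Real.exp (-(c * x ^ p))) * (p / p) by ring,
          key1, div_self hp.ne', one_mul, mul_one, hxx]
      rw [heq] at h3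
      exact h3.hasDerivWithinAt
    rw [intervalIntegral.integral_eq_sub_of_hasDeriv_right_of_le hb.le hcontF hderiv
      (key_intble s p c b hs hp hb.le)]
    simp [hF, Real.zero_rpow hp.ne', lowerGamma_zero, ha_def]

theorem stmt8 (lam ρo Pu Td ηc ηd : ℝ) (hlam : 0 < lam) (hρ : 0 < ρo) (hPu : 0 < Pu)
    (hc : 2 < ηc) (hd : 2 < ηd) (hTd : 1 < Td) :
    (∫ y in (0:ℝ)..Pu,
        (2 * y ^ (2 / ηd - 1) / (ηd * Pu ^ (2 / ηd))) *
          ∫ x in (0:ℝ)..(min (y / Td) Pu),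
            2 * π * lam * x ^ (2 / ηc - 1) * Real.exp (-(π * lam * (x / ρo) ^ (2 / ηc))) /
              (ηc * ρo ^ (2 / ηc) *
                (1 - Real.exp (-(π * lam * (Pu / ρo) ^ (2 / ηc)))))) =
      1 / (1 - Real.exp (-(π * lam * (Pu / ρo) ^ (2 / ηc)))) -
        ηc * (Td * ρo) ^ (2 / ηd) *
            lowerGamma (ηc / ηd) (π * lam * (Pu / (Td * ρo)) ^ (2 / ηc)) /
          (ηd * Pu ^ (2 / ηd) * (π * lam) ^ (ηc / ηd) *
            (1 - Real.exp (-(π * lam * (Pu / ρo) ^ (2 / ηc))))) := by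
  have hπ : 0 < π := Real.pi_pos
  have hpl : 0 < π * lam := by positivity
  have hηc : (0:ℝ) < ηc := by linarith
  have hηd : (0:ℝ) < ηd := by linarith
  have hTd0 : (0:ℝ) < Td := by linarith
  set p : ℝ := 2 / ηc with hp_def
  set s : ℝ := 2 / ηd with hs_def
  have hp : 0 < p := by positivity
  have hs : 0 < s := by positivity
  set C : ℝ := 1 - Real.exp (-(π * lam * (Pu / ρo) ^ p)) with hC_def
  have hC : 0 < C := by
    have hz : 0 < π * lam * (Pu / ρo) ^ p := by positivity
    have := Real.exp_lt_one_iff.mpr (neg_lt_zero.mpr hz)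
    simp only [hC_def]; linarith
  set c₁ : ℝ := π * lam / ρo ^ p with hc₁_def
  set c₂ : ℝ := π * lam / (Td * ρo) ^ p with hc₂_def
  have hc₁ : 0 < c₁ := by positivity
  have hc₂ : 0 < c₂ := by positivity
  -- inner integral closed form
  have hinner : ∀ y ∈ Set.Icc (0:ℝ) Pu,
      (∫ x in (0:ℝ)..(min (y / Td) Pu),
        2 * π * lam * x ^ (p - 1) * Real.exp (-(π * lam * (x / ρo) ^ p)) /
          (ηc * ρo ^ p * C)) = (1 - Real.exp (-(c₂ * y ^ p))) / C := by
    intro y hy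
    have hy0 : 0 ≤ y := hy.1
    have hyT : 0 ≤ y / Td := by positivity
    have hmin : min (y / Td) Pu = y / Td := by
      apply min_eq_left
      rw [div_le_iff₀ hTd0]
      nlinarith [hy.2]
    rw [hmin]
    have e1 : (∫ x in (0:ℝ)..(y / Td),
        2 * π * lam * x ^ (p - 1) * Real.exp (-(π * lam * (x / ρo) ^ p)) / (ηc * ρo ^ p * C))
        = ∫ x in (0:ℝ)..(y / Td),
          (2 * π * lam / (ηc * ρo ^ p * C)) * (x ^ (p - 1) * Real.exp (-(c₁ * x ^ p))) := by
      refine intervalIntegral.integral_congr fun x hx => ?_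
      rw [Set.uIcc_of_le hyT] at hx
      rw [Real.div_rpow hx.1 hρ.le]
      rw [show π * lam * (x ^ p / ρo ^ p) = c₁ * x ^ p by rw [hc₁_def]; ring]
      ring
    rw [e1, intervalIntegral.integral_const_mul,
      key_integral p p c₁ (y / Td) hp hp hc₁ hyT, div_self hp.ne', lowerGamma_one]
    have e2 : c₁ * (y / Td) ^ p = c₂ * y ^ p := by
      rw [Real.div_rpow hy0 hTd0.le, hc₁_def, hc₂_def,
        Real.mul_rpow hTd0.le hρ.le]
      ring
    rw [e2, Real.rpow_neg_one]
    have hρp : (0:ℝ) < ρo ^ p := by positivity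
    have hscal : 2 * π * lam / (ηc * ρo ^ p * C) * (c₁⁻¹ / p) = 1 / C := by
      rw [hc₁_def, hp_def, inv_div]
      field_simp
    calc 2 * π * lam / (ηc * ρo ^ p * C) * (c₁⁻¹ / p * (1 - Real.exp (-(c₂ * y ^ p))))
        = (2 * π * lam / (ηc * ρo ^ p * C) * (c₁⁻¹ / p)) * (1 - Real.exp (-(c₂ * y ^ p))) := by
          ring
      _ = (1 - Real.exp (-(c₂ * y ^ p))) / C := by rw [hscal]; ring
  -- rewrite outer integral
  have e3 : (∫ y in (0:ℝ)..Pu,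
      (2 * y ^ (s - 1) / (ηd * Pu ^ s)) *
        ∫ x in (0:ℝ)..(min (y / Td) Pu),
          2 * π * lam * x ^ (p - 1) * Real.exp (-(π * lam * (x / ρo) ^ p)) /
            (ηc * ρo ^ p * C))
      = ∫ y in (0:ℝ)..Pu,
        ((2 / (ηd * Pu ^ s * C)) * y ^ (s - 1)
          - (2 / (ηd * Pu ^ s * C)) * (y ^ (s - 1) * Real.exp (-(c₂ * y ^ p)))) := by
    refine intervalIntegral.integral_congr fun y hy => ?_
    rw [Set.uIcc_of_le hPu.le] at hy
    rw [hinner y hy]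
    have hPus : (0:ℝ) < Pu ^ s := by positivity
    field_simp
  rw [e3, intervalIntegral.integral_sub
      ((intervalIntegral.intervalIntegrable_rpow' (by linarith)).const_mul _)
      ((key_intble s p c₂ Pu hs hp hPu.le).const_mul _),
    intervalIntegral.integral_const_mul, intervalIntegral.integral_const_mul,
    integral_rpow (Or.inl (by linarith)),
    key_integral s p c₂ Pu hs hp hc₂ hPu.le]
  have hsp : s / p = ηc / ηd := by
    rw [hs_def, hp_def]
    field_simp
  have e4 : c₂ * Pu ^ p = π * lam * (Pu / (Td * ρo)) ^ p := by
    rw [Real.div_rpow hPu.le (by positivity), hc₂_def]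
    ring
  have t := ηc / ηd
  have e5 : c₂ ^ (-(ηc / ηd)) = (Td * ρo) ^ s / (π * lam) ^ (ηc / ηd) := by
    rw [Real.rpow_neg hc₂.le, hc₂_def,
      Real.div_rpow hpl.le (by positivity : (0:ℝ) ≤ (Td * ρo) ^ p),
      ← Real.rpow_mul (by positivity : (0:ℝ) ≤ Td * ρo)]
    have hpt : p * (ηc / ηd) = s := by
      rw [hp_def, hs_def]
      field_simp
    rw [hpt, inv_div]
  rw [hsp, e4, e5]
  have hzr : (0:ℝ) ^ (s - 1 + 1) = 0 := by
    rw [show s - 1 + 1 = s by ring]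
    exact Real.zero_rpow hs.ne'
  rw [hzr, show s - 1 + 1 = s by ring]
  have hPus : (0:ℝ) < Pu ^ s := by positivity
  have hplt : (0:ℝ) < (π * lam) ^ (ηc / ηd) := by positivity
  have hTRs : (0:ℝ) < (Td * ρo) ^ s := by positivity
  set G : ℝ := lowerGamma (ηc / ηd) (π * lam * (Pu / (Td * ρo)) ^ p) with hG_def
  have id1 : 2 / (ηd * Pu ^ s * C) * ((Pu ^ s - 0) / s) = 1 / C := by
    rw [sub_zero, hs_def]
    field_simp
  have id2 : 2 / (ηd * Pu ^ s * C) * ((Td * ρo) ^ s / (π * lam) ^ (ηc / ηd) / p * G) =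
      ηc * (Td * ρo) ^ s * G / (ηd * Pu ^ s * (π * lam) ^ (ηc / ηd) * C) := by
    rw [hp_def]
    field_simp
  rw [id1, id2]
end
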